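/- arXiv:2501.14796 — 2 statements merged into one kernel-verified Lean document; each statement's English description precedes it below -/
import Mathlib

section
/- A semi-Riemannian manifold of dimension n ≥ 2 is Einstein if and only if its projective curvature tensor satisfies the identity P(X,Y1,Y2,Y3) + P(X,Y2,Y3,Y1) + P(X,Y3,Y1,Y2) = 0 for all vector fields X, Y1, Y2, Y3. -/
open Finset

/-- A semi-Riemannian manifold of dimension `n ≥ 2` is Einstein
(`S = (κ/n) g`, with `κ` the scalar curvature, i.e. the `g`-trace of the Ricci
tensor `S`) if and only if its projective curvature tensor
`P(X,Y,Z,W) = R(X,Y,Z,W) − (1/(n−1))(g(X,W)S(Y,Z) − g(Y,W)S(X,Z))`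
satisfies `P(X,Y₁,Y₂,Y₃) + P(X,Y₂,Y₃,Y₁) + P(X,Y₃,Y₁,Y₂) = 0` for all `X, Y₁, Y₂, Y₃`. -/
theorem einstein_iff_projCurv_cyclic_last_three
    {V : Type*} [AddCommGroup V] [Module ℝ V] (n : ℕ) (hn : 2 ≤ n)
    (e : Module.Basis (Fin n) ℝ V)
    (g S : V →ₗ[ℝ] V →ₗ[ℝ] ℝ)
    (R : V →ₗ[ℝ] V →ₗ[ℝ] V →ₗ[ℝ] V →ₗ[ℝ] ℝ)
    (ginv : Fin n → Fin n → ℝ)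
    (hginv : ∀ a c, (∑ b, ginv a b * g (e b) (e c)) = if a = c then (1 : ℝ) else 0)
    (hgsym : ∀ X Y, g X Y = g Y X)
    (hSsym : ∀ X Y, S X Y = S Y X)
    (hR1 : ∀ X Y Z W, R X Y Z W = - R Y X Z W)
    (hR2 : ∀ X Y Z W, R X Y Z W = - R X Y W Z)
    (hR3 : ∀ X Y Z W, R X Y Z W = R Z W X Y)
    (hR4 : ∀ X Y Z W, R X Y Z W + R Y Z X W + R Z X Y W = 0)
    (κ : ℝ) (hκ : κ = ∑ a, ∑ b, ginv a b * S (e a) (e b))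
    (P : V → V → V → V → ℝ)
    (hP : ∀ X Y Z W, P X Y Z W =
      R X Y Z W - (1 / ((n : ℝ) - 1)) * (g X W * S Y Z - g Y W * S X Z)) :
    (∀ X Y, S X Y = (κ / (n : ℝ)) * g X Y) ↔
      (∀ X Y₁ Y₂ Y₃, P X Y₁ Y₂ Y₃ + P X Y₂ Y₃ Y₁ + P X Y₃ Y₁ Y₂ = 0) := by
  -- cyclic Bianchi over the last three slots
  have hRcyc : ∀ X A B C, R X A B C + R X B C A + R X C A B = 0 := by
    intro X A B C
    linear_combination hR3 X A B C + hR2 B C X A + hR3 X B C A + hR2 C A X B +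
      hR3 X C A B + hR2 A B X C - hR4 A B C X
  have hn0 : (n : ℝ) ≠ 0 := by positivity -- fix later maybe
  have hn1 : ((n : ℝ) - 1) ≠ 0 := by
    have : (2 : ℝ) ≤ (n : ℝ) := by exact_mod_cast hn
    linarith
  constructor
  · intro hE X Y₁ Y₂ Y₃
    rw [hP, hP, hP, hE Y₁ Y₂, hE X Y₂, hE Y₂ Y₃, hE X Y₃, hE Y₃ Y₁, hE X Y₁]
    linear_combination hRcyc X Y₁ Y₂ Y₃ - (1/((n:ℝ)-1)) * (κ/(n:ℝ)) *
      (g X Y₃ * hgsym Y₁ Y₂ + g X Y₁ * hgsym Y₂ Y₃ + g X Y₂ * hgsym Y₃ Y₁)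
  · intro h X Y
    -- expansion lemmas
    have lin1 : ∀ (T : V →ₗ[ℝ] V →ₗ[ℝ] ℝ) (X Y : V),
        T X Y = ∑ b, e.repr X b * T (e b) Y := by
      intro T X Y
      conv_lhs => rw [← e.sum_repr X]
      simp [LinearMap.sum_apply, map_sum, LinearMap.smul_apply, smul_eq_mul, -Module.Basis.sum_repr]
    have lin2 : ∀ (T : V →ₗ[ℝ] V →ₗ[ℝ] ℝ) (X Y : V),
        T X Y = ∑ b, e.repr Y b * T X (e b) := by
      intro T X Y
      conv_lhs => rw [← e.sum_repr Y]
      simp [map_sum, map_smul, smul_eq_mul, -Module.Basis.sum_repr]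
    -- symmetry of ginv
    have hisym : ∀ a b, ginv a b = ginv b a := by
      have hAG : (Matrix.of ginv) * (Matrix.of fun a b => g (e a) (e b)) = 1 := by
        ext a c
        simpa [Matrix.mul_apply, Matrix.one_apply] using hginv a c
      have h2 : (Matrix.of fun a b => g (e a) (e b)) * (Matrix.of ginv) = 1 :=
        mul_eq_one_comm.mp hAG
      have hGsym : Matrix.transpose (Matrix.of fun a b => g (e a) (e b)) =
          (Matrix.of fun a b => g (e a) (e b)) := by
        ext a b; exact hgsym (e b) (e a)
      have hAtG : Matrix.transpose (Matrix.of ginv) * (Matrix.of fun a b => g (e a) (e b))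
          = 1 := by
        calc Matrix.transpose (Matrix.of ginv) * (Matrix.of fun a b => g (e a) (e b))
            = Matrix.transpose (Matrix.of ginv) *
              Matrix.transpose (Matrix.of fun a b => g (e a) (e b)) := by rw [hGsym]
          _ = Matrix.transpose ((Matrix.of fun a b => g (e a) (e b)) * Matrix.of ginv) :=
              (Matrix.transpose_mul _ _).symm
          _ = 1 := by rw [h2, Matrix.transpose_one]
      have : Matrix.transpose (Matrix.of ginv) = Matrix.of ginv := by
        calc Matrix.transpose (Matrix.of ginv)
            = Matrix.transpose (Matrix.of ginv) *
              ((Matrix.of fun a b => g (e a) (e b)) * Matrix.of ginv) := by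
              rw [h2, Matrix.mul_one]
          _ = (Matrix.transpose (Matrix.of ginv) * (Matrix.of fun a b => g (e a) (e b)))
              * Matrix.of ginv := by rw [Matrix.mul_assoc]
          _ = Matrix.of ginv := by rw [hAtG, Matrix.one_mul]
      intro a b
      exact (congrArg (fun M => M b a) this)
    -- contraction lemma
    have ctr : ∀ (a : Fin n) (Y : V), ∑ b, ginv a b * g (e b) Y = e.repr Y a := by
      intro a Y
      calc ∑ b, ginv a b * g (e b) Y
          = ∑ b, ∑ c, e.repr Y c * (ginv a b * g (e b) (e c)) := by
            refine Finset.sum_congr rfl fun b _ => ?_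
            rw [lin2 g (e b) Y, Finset.mul_sum]
            exact Finset.sum_congr rfl fun c _ => by ring
        _ = ∑ c, e.repr Y c * ∑ b, ginv a b * g (e b) (e c) := by
            rw [Finset.sum_comm]
            exact Finset.sum_congr rfl fun c _ => by rw [Finset.mul_sum]
        _ = ∑ c, e.repr Y c * (if a = c then (1:ℝ) else 0) := by
            exact Finset.sum_congr rfl fun c _ => by rw [hginv]
        _ = e.repr Y a := by simp
    -- the Q identity
    have hQ : ∀ X A B Y,
        g X Y * S A B - g A Y * S X B + g X A * S B Y - g B A * S X Y
          + g X B * S Y A - g Y B * S X A = 0 := by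
      intro X A B Y
      have h1 := h X A B Y
      rw [hP, hP, hP] at h1
      have h2 := hRcyc X A B Y
      have h3 : (1/((n:ℝ)-1)) *
          (g X Y * S A B - g A Y * S X B + g X A * S B Y - g B A * S X Y
            + g X B * S Y A - g Y B * S X A) = 0 := by linear_combination h2 - h1
      have hc : (1/((n:ℝ)-1)) ≠ 0 := one_div_ne_zero hn1
      exact (mul_eq_zero.mp h3).resolve_left hc
    -- contract Q with ginv
    have hQ2 : (∑ a, ∑ b, ginv a b *
        (g X Y * S (e a) (e b) - g (e a) Y * S X (e b) + g X (e a) * S (e b) Y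
          - g (e b) (e a) * S X Y + g X (e b) * S Y (e a) - g Y (e b) * S X (e a))) = 0 := by
      refine Finset.sum_eq_zero fun a _ => Finset.sum_eq_zero fun b _ => ?_
      rw [hQ X (e a) (e b) Y, mul_zero]
    -- evaluate the six contractions
    have E1 : ∑ a, ∑ b, ginv a b * (g X Y * S (e a) (e b)) = κ * g X Y := by
      rw [hκ, Finset.sum_mul]
      exact Finset.sum_congr rfl fun a _ => by rw [Finset.sum_mul]; exact Finset.sum_congr rfl fun b _ => by ring
    have E2 : ∑ a, ∑ b, ginv a b * (g (e a) Y * S X (e b)) = S X Y := by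
      rw [Finset.sum_comm]
      calc ∑ b, ∑ a, ginv a b * (g (e a) Y * S X (e b))
          = ∑ b, e.repr Y b * S X (e b) := by
            refine Finset.sum_congr rfl fun b _ => ?_
            rw [← ctr b Y, Finset.sum_mul]
            exact Finset.sum_congr rfl fun a _ => by rw [hisym a b]; ring
        _ = S X Y := (lin2 S X Y).symm
    have E3 : ∑ a, ∑ b, ginv a b * (g X (e a) * S (e b) Y) = S X Y := by
      rw [Finset.sum_comm]
      calc ∑ b, ∑ a, ginv a b * (g X (e a) * S (e b) Y)
          = ∑ b, e.repr X b * S (e b) Y := by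
            refine Finset.sum_congr rfl fun b _ => ?_
            rw [← ctr b X, Finset.sum_mul]
            refine Finset.sum_congr rfl fun a _ => ?_
            rw [hisym a b, hgsym X (e a)]; ring
        _ = S X Y := (lin1 S X Y).symm
    have E4 : ∑ a, ∑ b, ginv a b * (g (e b) (e a) * S X Y) = (n : ℝ) * S X Y := by
      calc ∑ a, ∑ b, ginv a b * (g (e b) (e a) * S X Y)
          = ∑ a : Fin n, (if a = a then (1:ℝ) else 0) * S X Y := by
            refine Finset.sum_congr rfl fun a _ => ?_
            rw [← hginv a a, Finset.sum_mul]
            exact Finset.sum_congr rfl fun b _ => by ring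
        _ = (n : ℝ) * S X Y := by simp [Finset.card_univ]
    have E5 : ∑ a, ∑ b, ginv a b * (g X (e b) * S Y (e a)) = S X Y := by
      calc ∑ a, ∑ b, ginv a b * (g X (e b) * S Y (e a))
          = ∑ a, e.repr X a * S Y (e a) := by
            refine Finset.sum_congr rfl fun a _ => ?_
            rw [← ctr a X, Finset.sum_mul]
            refine Finset.sum_congr rfl fun b _ => ?_
            rw [hgsym X (e b)]; ring
        _ = S Y X := (lin2 S Y X).symm
        _ = S X Y := hSsym Y X
    have E6 : ∑ a, ∑ b, ginv a b * (g Y (e b) * S X (e a)) = S X Y := by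
      calc ∑ a, ∑ b, ginv a b * (g Y (e b) * S X (e a))
          = ∑ a, e.repr Y a * S X (e a) := by
            refine Finset.sum_congr rfl fun a _ => ?_
            rw [← ctr a Y, Finset.sum_mul]
            refine Finset.sum_congr rfl fun b _ => ?_
            rw [hgsym Y (e b)]; ring
        _ = S X Y := (lin2 S X Y).symm
    have key : κ * g X Y - (n : ℝ) * S X Y = 0 := by
      rw [← hQ2]
      rw [show (∑ a, ∑ b, ginv a b *
        (g X Y * S (e a) (e b) - g (e a) Y * S X (e b) + g X (e a) * S (e b) Y
          - g (e b) (e a) * S X Y + g X (e b) * S Y (e a) - g Y (e b) * S X (e a)))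
        = (∑ a, ∑ b, ginv a b * (g X Y * S (e a) (e b)))
          - (∑ a, ∑ b, ginv a b * (g (e a) Y * S X (e b)))
          + (∑ a, ∑ b, ginv a b * (g X (e a) * S (e b) Y))
          - (∑ a, ∑ b, ginv a b * (g (e b) (e a) * S X Y))
          + (∑ a, ∑ b, ginv a b * (g X (e b) * S Y (e a)))
          - (∑ a, ∑ b, ginv a b * (g Y (e b) * S X (e a))) from by
            simp only [← Finset.sum_add_distrib, ← Finset.sum_sub_distrib]
            exact Finset.sum_congr rfl fun a _ => Finset.sum_congr rfl fun b _ => by ring]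
      rw [E1, E2, E3, E4, E5, E6]; ring
    field_simp
    linarith [key]
end

section
/- The Kasner metric ds² = dt² + t^{2a₁}dx² + t^{2a₂}dy² + t^{2a₃}dz² on {t > 0} × ℝ³, where a₁² + a₂² + a₃² = 1 and a₁ + a₂ + a₃ = 1, is Ricci flat: its Ricci tensor vanishes identically. -/
set_option maxHeartbeats 2000000


open Finset

/-- Partial derivative `∂ᵢ f` of a scalar function on `ℝ⁴`. -/
noncomputable def pd (i : Fin 4) (f : (Fin 4 → ℝ) → ℝ) (x : Fin 4 → ℝ) : ℝ :=
  fderiv ℝ f x (Pi.single i 1)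

/-- Christoffel symbols of the second kind
`Γ^a_{bc} = (1/2) g^{aα}(∂_b g_{αc} + ∂_c g_{αb} − ∂_α g_{bc})`. -/
noncomputable def christoffel (g : (Fin 4 → ℝ) → Matrix (Fin 4) (Fin 4) ℝ)
    (a b c : Fin 4) (x : Fin 4 → ℝ) : ℝ :=
  (1 / 2) * ∑ α, (g x)⁻¹ a α *
    (pd b (fun y => g y α c) x + pd c (fun y => g y α b) x
      - pd α (fun y => g y b c) x)

/-- The (0,4) Riemann curvature tensor
`R_{abcd} = g_{aα}(∂_d Γ^α_{bc} − ∂_c Γ^α_{bd} + Γ^β_{bc}Γ^α_{βd} − Γ^β_{bd}Γ^α_{βc})`. -/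
noncomputable def riemann (g : (Fin 4 → ℝ) → Matrix (Fin 4) (Fin 4) ℝ)
    (a b c d : Fin 4) (x : Fin 4 → ℝ) : ℝ :=
  ∑ α, g x a α *
    (pd d (christoffel g α b c) x - pd c (christoffel g α b d) x
      + ∑ β, (christoffel g β b c x * christoffel g α β d x
        - christoffel g β b d x * christoffel g α β c x))

/-- The Ricci tensor `S_{ab} = g^{αβ} R_{αabβ}`. -/
noncomputable def ricci (g : (Fin 4 → ℝ) → Matrix (Fin 4) (Fin 4) ℝ)
    (a b : Fin 4) (x : Fin 4 → ℝ) : ℝ :=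
  ∑ α, ∑ β, (g x)⁻¹ α β * riemann g α a b β x

/-- The Kasner metric `ds² = dt² + t^{2a₁}dx² + t^{2a₂}dy² + t^{2a₃}dz²`. -/
noncomputable def kasnerMetric (a₁ a₂ a₃ : ℝ) (x : Fin 4 → ℝ) :
    Matrix (Fin 4) (Fin 4) ℝ :=
  Matrix.diagonal
    ![1, Real.rpow (x 0) (2 * a₁), Real.rpow (x 0) (2 * a₂),
      Real.rpow (x 0) (2 * a₃)]

noncomputable def pvec (a₁ a₂ a₃ : ℝ) : Fin 4 → ℝ := ![0, a₁, a₂, a₃]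

noncomputable def Gam (p : Fin 4 → ℝ) (a b c : Fin 4) (t : ℝ) : ℝ :=
  (if a = 0 ∧ b = c then -(p b) else 0) * (t ^ (2 * p b) * t ^ (-1 : ℝ))
  + ((if b = 0 ∧ c = a then p a else 0) + (if c = 0 ∧ b = a then p a else 0)) * t ^ (-1 : ℝ)

noncomputable def dGam (p : Fin 4 → ℝ) (a b c : Fin 4) (t : ℝ) : ℝ :=
  (if a = 0 ∧ b = c then -(p b) else 0) *
      ((2 * p b - 1) * (t ^ (2 * p b) * t ^ (-1 : ℝ) * t ^ (-1 : ℝ)))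
  + ((if b = 0 ∧ c = a then p a else 0) + (if c = 0 ∧ b = a then p a else 0)) *
      (-(t ^ (-1 : ℝ) * t ^ (-1 : ℝ)))

lemma hasDerivAt_Gam (p : Fin 4 → ℝ) (a b c : Fin 4) {t : ℝ} (ht : 0 < t) :
    HasDerivAt (Gam p a b c) (dGam p a b c t) t := by
  have h1 : HasDerivAt (fun s : ℝ => s ^ (2 * p b)) (2 * p b * t ^ (2 * p b - 1)) t :=
    Real.hasDerivAt_rpow_const (Or.inl ht.ne')
  have h2 : HasDerivAt (fun s : ℝ => s ^ (-1 : ℝ)) (-1 * t ^ (-1 - 1 : ℝ)) t :=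
    Real.hasDerivAt_rpow_const (Or.inl ht.ne')
  have h := (((h1.mul h2).const_mul (if a = 0 ∧ b = c then -(p b) else 0)).add
    ((h2.const_mul ((if b = 0 ∧ c = a then p a else 0) + (if c = 0 ∧ b = a then p a else 0)))))
  convert h using 1
  · exact rfl
  · exact rfl
  · exact rfl
  rw [show (2 * p b - 1 : ℝ) = 2 * p b + (-1) by ring, Real.rpow_add ht,
    show (-1 - 1 : ℝ) = -1 + -1 by ring, Real.rpow_add ht]
  unfold dGam
  ring

lemma pd_comp0 {f : ℝ → ℝ} {f' : ℝ} {x : Fin 4 → ℝ} (h : HasDerivAt f f' (x 0)) (i : Fin 4) :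
    pd i (fun y => f (y 0)) x = if i = 0 then f' else 0 := by
  have hp : HasFDerivAt (fun y : Fin 4 → ℝ => y 0)
      (ContinuousLinearMap.proj (R := ℝ) (φ := fun _ : Fin 4 => ℝ) 0) x :=
    hasFDerivAt_apply 0 x
  have h2 := h.comp_hasFDerivAt x hp
  unfold pd
  rw [show (fun y : Fin 4 → ℝ => f (y 0)) = (f ∘ fun y : Fin 4 → ℝ => y 0) from rfl, h2.fderiv]
  by_cases hi : i = 0 <;> simp [hi, Pi.single_apply]

lemma pd_const {c : ℝ} {x : Fin 4 → ℝ} (i : Fin 4) : pd i (fun _ => c) x = 0 := by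
  simp [pd]

lemma pd_Gam (p : Fin 4 → ℝ) (a b c : Fin 4) {x : Fin 4 → ℝ} (hx : 0 < x 0) (i : Fin 4) :
    pd i (fun y => Gam p a b c (y 0)) x = if i = 0 then dGam p a b c (x 0) else 0 :=
  pd_comp0 (hasDerivAt_Gam p a b c hx) i

lemma pd_rpow0 {e : ℝ} {x : Fin 4 → ℝ} (hx : 0 < x 0) (i : Fin 4) :
    pd i (fun y => (y 0) ^ e) x = if i = 0 then e * (x 0) ^ (e - 1) else 0 :=
  pd_comp0 (Real.hasDerivAt_rpow_const (Or.inl hx.ne')) i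

lemma kasner_diag (a₁ a₂ a₃ : ℝ) (y : Fin 4 → ℝ) :
    kasnerMetric a₁ a₂ a₃ y
      = Matrix.diagonal (fun i => (y 0) ^ (2 * pvec a₁ a₂ a₃ i)) := by
  unfold kasnerMetric
  refine congrArg Matrix.diagonal (funext fun i => ?_)
  fin_cases i <;> simp [pvec, Real.rpow_eq_pow]

lemma kasner_apply (a₁ a₂ a₃ : ℝ) (y : Fin 4 → ℝ) (i j : Fin 4) :
    kasnerMetric a₁ a₂ a₃ y i j
      = if i = j then (y 0) ^ (2 * pvec a₁ a₂ a₃ i) else 0 := by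
  rw [kasner_diag, Matrix.diagonal_apply]

lemma kasner_inv_apply (a₁ a₂ a₃ : ℝ) {y : Fin 4 → ℝ} (hy : 0 < y 0) (i j : Fin 4) :
    (kasnerMetric a₁ a₂ a₃ y)⁻¹ i j
      = if i = j then (y 0) ^ (-(2 * pvec a₁ a₂ a₃ i)) else 0 := by
  have h : kasnerMetric a₁ a₂ a₃ y
      * Matrix.diagonal (fun i => (y 0) ^ (-(2 * pvec a₁ a₂ a₃ i))) = 1 := by
    rw [kasner_diag, Matrix.diagonal_mul_diagonal]
    rw [show (fun i => (y 0) ^ (2 * pvec a₁ a₂ a₃ i) * (y 0) ^ (-(2 * pvec a₁ a₂ a₃ i)))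
        = fun _ : Fin 4 => (1:ℝ) from funext fun i => by
      rw [← Real.rpow_add hy, show 2 * pvec a₁ a₂ a₃ i + -(2 * pvec a₁ a₂ a₃ i) = 0 by ring,
        Real.rpow_zero]]
    exact Matrix.diagonal_one
  rw [Matrix.inv_eq_right_inv h, Matrix.diagonal_apply]

lemma chris_eq (a₁ a₂ a₃ : ℝ) {y : Fin 4 → ℝ} (hy : 0 < y 0) (a b c : Fin 4) :
    christoffel (kasnerMetric a₁ a₂ a₃) a b c y = Gam (pvec a₁ a₂ a₃) a b c (y 0) := by
  have hp0 : pvec a₁ a₂ a₃ 0 = 0 := rfl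
  set p := pvec a₁ a₂ a₃ with hp
  have hpd : ∀ i α β : Fin 4, pd i (fun y' => kasnerMetric a₁ a₂ a₃ y' α β) y
      = if α = β ∧ i = 0 then 2 * p α * ((y 0) ^ (2 * p α) * (y 0) ^ (-1:ℝ)) else 0 := by
    intro i α β
    by_cases h : α = β
    · have hf : (fun y' => kasnerMetric a₁ a₂ a₃ y' α β) = fun y' => (y' 0) ^ (2 * p α) := by
        funext y'; rw [kasner_apply]; simp [h, hp]
      have he : (y 0) ^ (2 * p α - 1) = (y 0) ^ (2 * p α) * (y 0) ^ (-1:ℝ) := by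
        rw [← Real.rpow_add hy, show 2 * p α + (-1:ℝ) = 2 * p α - 1 by ring]
      rw [hf, pd_rpow0 hy, he]
      by_cases hi : i = 0 <;> simp [h, hi]
    · have hf : (fun y' => kasnerMetric a₁ a₂ a₃ y' α β) = fun _ => (0:ℝ) := by
        funext y'; rw [kasner_apply]; simp [h]
      rw [hf, pd_const]; simp [h]
  unfold christoffel
  simp only [hpd, kasner_inv_apply a₁ a₂ a₃ hy, ← hp, ite_mul, zero_mul,
    Finset.sum_ite_eq, Finset.mem_univ, if_true]
  have e1 : (a = c ∧ b = 0) ↔ (b = 0 ∧ c = a) :=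
    ⟨fun ⟨u, v⟩ => ⟨v, u.symm⟩, fun ⟨u, v⟩ => ⟨v.symm, u⟩⟩
  have e2 : (a = b ∧ c = 0) ↔ (c = 0 ∧ b = a) :=
    ⟨fun ⟨u, v⟩ => ⟨v, u.symm⟩, fun ⟨u, v⟩ => ⟨v.symm, u⟩⟩
  have e3 : (b = c ∧ a = 0) ↔ (a = 0 ∧ b = c) := And.comm
  simp only [e1, e2, e3]
  unfold Gam
  have hA : ∀ e : ℝ, (y 0) ^ (-e) * (y 0) ^ e = 1 := fun e => by
    rw [← Real.rpow_add hy, show -e + e = 0 by ring, Real.rpow_zero]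
  split_ifs with h1 h2 h3 h4 h5 h6 h7
  · obtain ⟨rfl, rfl⟩ := h1
    obtain ⟨rfl, -⟩ := h3
    rw [hp0]; norm_num
  · exact absurd ⟨by rw [← h1.2]; exact h2.1, by rw [h1.1, h2.1]⟩ h3
  · exact absurd ⟨by rw [← h4.2]; exact h1.1, by rw [h1.1, h4.1]⟩ h2
  · obtain ⟨rfl, rfl⟩ := h1
    linear_combination (p c * (y 0) ^ (-1:ℝ)) * hA (2 * p c)
  · exact absurd ⟨by rw [h6.2]; exact h5.1, by rw [h5.1, h6.1]⟩ h1
  · obtain ⟨rfl, rfl⟩ := h5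
    linear_combination (p b * (y 0) ^ (-1:ℝ)) * hA (2 * p b)
  · obtain ⟨rfl, rfl⟩ := h7
    rw [hp0]; norm_num; try ring
  · norm_num

lemma pd_chris (a₁ a₂ a₃ : ℝ) {x : Fin 4 → ℝ} (hx : 0 < x 0) (i α b c : Fin 4) :
    pd i (christoffel (kasnerMetric a₁ a₂ a₃) α b c) x
      = if i = 0 then dGam (pvec a₁ a₂ a₃) α b c (x 0) else 0 := by
  have hev : christoffel (kasnerMetric a₁ a₂ a₃) α b c
      =ᶠ[nhds x] fun y => Gam (pvec a₁ a₂ a₃) α b c (y 0) := by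
    have hopen : IsOpen {y : Fin 4 → ℝ | 0 < y 0} :=
      isOpen_lt continuous_const (continuous_apply 0)
    filter_upwards [hopen.mem_nhds hx] with y hy using chris_eq a₁ a₂ a₃ hy α b c
  have h : pd i (christoffel (kasnerMetric a₁ a₂ a₃) α b c) x
      = pd i (fun y => Gam (pvec a₁ a₂ a₃) α b c (y 0)) x := by
    unfold pd; rw [hev.fderiv_eq]
  rw [h, pd_Gam _ _ _ _ hx]

/-- The Kasner metric with exponents satisfying `a₁² + a₂² + a₃² = 1` and
`a₁ + a₂ + a₃ = 1` is Ricci flat on `{t > 0} × ℝ³`. -/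
theorem kasner_ricci_flat (a₁ a₂ a₃ : ℝ)
    (hsq : a₁ ^ 2 + a₂ ^ 2 + a₃ ^ 2 = 1) (hsum : a₁ + a₂ + a₃ = 1) :
    ∀ x : Fin 4 → ℝ, 0 < x 0 →
      ∀ a b : Fin 4, ricci (kasnerMetric a₁ a₂ a₃) a b x = 0 := by

  intro x hx a b
  unfold ricci riemann
  simp only [kasner_inv_apply a₁ a₂ a₃ hx, kasner_apply, pd_chris a₁ a₂ a₃ hx,
    chris_eq a₁ a₂ a₃ hx, ite_mul, zero_mul, Finset.sum_ite_eq, Finset.mem_univ, if_true]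
  have hA : ∀ e : ℝ, x 0 ^ (-e) * x 0 ^ e = 1 := fun e => by
    rw [← Real.rpow_add hx, show -e + e = 0 by ring, Real.rpow_zero]
  fin_cases a <;> fin_cases b <;>
    simp [Fin.sum_univ_four, Gam, dGam, pvec]
  · linear_combination ((a₁ - a₁^2) * (x 0 ^ (-1:ℝ) * x 0 ^ (-1:ℝ))) * hA (2*a₁)
      + ((a₂ - a₂^2) * (x 0 ^ (-1:ℝ) * x 0 ^ (-1:ℝ))) * hA (2*a₂)
      + ((a₃ - a₃^2) * (x 0 ^ (-1:ℝ) * x 0 ^ (-1:ℝ))) * hA (2*a₃)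
      + (x 0 ^ (-1:ℝ) * x 0 ^ (-1:ℝ)) * hsum - (x 0 ^ (-1:ℝ) * x 0 ^ (-1:ℝ)) * hsq
  · linear_combination (-(a₁*a₂) * (x 0 ^ (2*a₁) * (x 0 ^ (-1:ℝ) * x 0 ^ (-1:ℝ)))) * hA (2*a₂)
      + (-(a₁*a₃) * (x 0 ^ (2*a₁) * (x 0 ^ (-1:ℝ) * x 0 ^ (-1:ℝ)))) * hA (2*a₃)
      + (-a₁ * (x 0 ^ (2*a₁) * (x 0 ^ (-1:ℝ) * x 0 ^ (-1:ℝ)))) * hsum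
  · linear_combination (-(a₂*a₁) * (x 0 ^ (2*a₂) * (x 0 ^ (-1:ℝ) * x 0 ^ (-1:ℝ)))) * hA (2*a₁)
      + (-(a₂*a₃) * (x 0 ^ (2*a₂) * (x 0 ^ (-1:ℝ) * x 0 ^ (-1:ℝ)))) * hA (2*a₃)
      + (-a₂ * (x 0 ^ (2*a₂) * (x 0 ^ (-1:ℝ) * x 0 ^ (-1:ℝ)))) * hsum
  · linear_combination (-(a₃*a₁) * (x 0 ^ (2*a₃) * (x 0 ^ (-1:ℝ) * x 0 ^ (-1:ℝ)))) * hA (2*a₁)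
      + (-(a₃*a₂) * (x 0 ^ (2*a₃) * (x 0 ^ (-1:ℝ) * x 0 ^ (-1:ℝ)))) * hA (2*a₂)
      + (-a₃ * (x 0 ^ (2*a₃) * (x 0 ^ (-1:ℝ) * x 0 ^ (-1:ℝ)))) * hsum
end
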